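/- If L is the Laplacian matrix of a weighted digraph G on n vertices with in-forest dimension d, then the group inverse of L satisfies L^# = σ_{n-d}^{-1} (Q_{n-d-1} - (σ_{n-d-1}/σ_{n-d}) Q_{n-d}), where σ_k is the total weight of spanning in-forests of G with k arcs and Q_k is the matrix whose (i,j) entry is the total weight of in-forests with k arcs in which vertex i belongs to the tree converging to j. -/

import Mathlib

open scoped Classical
open Finset Matrix

namespace MFPT

variable {n : ℕ}

/-- The step relation of a functional subgraph: `a → b` when `F a = some b`. -/
def Step (F : Fin n → Option (Fin n)) (a b : Fin n) : Prop := F a = some b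

/-- `F` is a spanning in-forest of the weighted digraph with weight matrix `w`:
every chosen arc is a genuine (loopless, positive-weight) arc and there is no directed cycle.
Each weak component of such a functional digraph is a converging tree (root = the vertex
mapped to `none`). -/
def IsInForest (w : Matrix (Fin n) (Fin n) ℝ) (F : Fin n → Option (Fin n)) : Prop :=
  (∀ v u, F v = some u → v ≠ u ∧ 0 < w v u) ∧ ∀ v, ¬ Relation.TransGen (Step F) v v

/-- Weight of a spanning subgraph: the product of its arc weights. -/
noncomputable def forestWeight (w : Matrix (Fin n) (Fin n) ℝ) (F : Fin n → Option (Fin n)) : ℝ :=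
  ∏ v, (F v).elim 1 (fun u => w v u)

/-- Number of arcs of a functional subgraph. -/
def arcCount (F : Fin n → Option (Fin n)) : ℕ :=
  (Finset.univ.filter fun v => (F v).isSome).card

/-- Vertex `i` belongs to the tree of `F` converging to (rooted at) `j`. -/
def InTreeOf (F : Fin n → Option (Fin n)) (i j : Fin n) : Prop :=
  Relation.ReflTransGen (Step F) i j ∧ F j = none

/-- `σ_k`: total weight of spanning in-forests with `k` arcs. -/
noncomputable def sigmaW (w : Matrix (Fin n) (Fin n) ℝ) (k : ℕ) : ℝ :=
  ∑ F : Fin n → Option (Fin n),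
    if IsInForest w F ∧ arcCount F = k then forestWeight w F else 0

/-- `Q_k`: the matrix whose `(i,j)` entry is the total weight of in-forests with `k` arcs
in which `i` belongs to the tree converging to `j`. -/
noncomputable def Qmat (w : Matrix (Fin n) (Fin n) ℝ) (k : ℕ) : Matrix (Fin n) (Fin n) ℝ :=
  Matrix.of fun i j => ∑ F : Fin n → Option (Fin n),
    if IsInForest w F ∧ arcCount F = k ∧ InTreeOf F i j then forestWeight w F else 0

/-- `q_j`: total weight of spanning trees converging to `j` (in-forests with `n-1` arcs
whose unique root is `j`). -/
noncomputable def treeWeight (w : Matrix (Fin n) (Fin n) ℝ) (j : Fin n) : ℝ :=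
  ∑ F : Fin n → Option (Fin n),
    if IsInForest w F ∧ arcCount F = n - 1 ∧ F j = none then forestWeight w F else 0

/-- `f_{ij}`: total weight of 2-tree in-forests having one tree containing `i` and the other
tree converging to `j`. -/
noncomputable def fWeight (w : Matrix (Fin n) (Fin n) ℝ) (i j : Fin n) : ℝ :=
  ∑ F : Fin n → Option (Fin n),
    if IsInForest w F ∧ arcCount F = n - 2 ∧ F j = none ∧
        ¬ Relation.ReflTransGen (Step F) i j
      then forestWeight w F else 0

/-- The Laplacian matrix of the weighted digraph with weight matrix `w`. -/
noncomputable def lap (w : Matrix (Fin n) (Fin n) ℝ) : Matrix (Fin n) (Fin n) ℝ :=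
  Matrix.of fun i j => if i = j then ∑ k ∈ Finset.univ.erase i, w i k else - w i j

/-- `X` is the group inverse of `L`. -/
def IsGroupInverse (L X : Matrix (Fin n) (Fin n) ℝ) : Prop :=
  L * X * L = L ∧ X * L * X = X ∧ L * X = X * L

/-- `T` is (row-)stochastic. -/
def IsStochastic (T : Matrix (Fin n) (Fin n) ℝ) : Prop :=
  (∀ i j, 0 ≤ T i j) ∧ ∀ i, ∑ j, T i j = 1

/-- Irreducibility of `T`. -/
def IsIrreducible (T : Matrix (Fin n) (Fin n) ℝ) : Prop :=
  ∀ i j, ∃ k : ℕ, 0 < (T ^ k) i j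

/-- Ergodicity (primitivity) of `T`: some power of `T` is entrywise positive. -/
def IsErgodic (T : Matrix (Fin n) (Fin n) ℝ) : Prop :=
  ∃ N : ℕ, ∀ i j, 0 < (T ^ N) i j

/-- `π` is a stationary distribution of `T`. -/
def IsStationary (T : Matrix (Fin n) (Fin n) ℝ) (π : Fin n → ℝ) : Prop :=
  (∀ i, 0 ≤ π i) ∧ (∑ i, π i = 1) ∧ ∀ j, ∑ i, π i * T i j = π j

/-- Probability of the trajectory `p` of length `k` under transition matrix `T`. -/
noncomputable def pathProb (T : Matrix (Fin n) (Fin n) ℝ) (k : ℕ)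
    (p : Fin (k + 1) → Fin n) : ℝ :=
  ∏ t : Fin k, T (p t.castSucc) (p t.succ)

/-- `Pr(F_{ij} = k)`: probability that, starting at `i`, the chain first reaches `j`
(at a step `p ≥ 1`) exactly at time `k`. -/
noncomputable def firstPassageProb (T : Matrix (Fin n) (Fin n) ℝ) (i j : Fin n) (k : ℕ) : ℝ :=
  ∑ p : Fin (k + 1) → Fin n,
    if p 0 = i ∧ p (Fin.last k) = j ∧
        (∀ t : Fin (k + 1), t ≠ 0 → t ≠ Fin.last k → p t ≠ j)
      then pathProb T k p else 0

/-- Mean first passage time `m_{ij} = E F_{ij} = ∑ k k·Pr(F_{ij}=k)`. -/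
noncomputable def mfpt (T : Matrix (Fin n) (Fin n) ℝ) (i j : Fin n) : ℝ :=
  ∑' k : ℕ, (k : ℝ) * firstPassageProb T i j k

end MFPT

namespace MFPT

variable {n : ℕ}

section Reach

variable {F F' : Fin n → Option (Fin n)} {i a b c u v : Fin n}

lemma step_det (h1 : Step F a b) (h2 : Step F a c) : b = c := by
  unfold Step at h1 h2; rw [h1] at h2; exact Option.some.inj h2

/-- reachability is total on the walk from a common source -/
lemma reach_total (ha : Relation.ReflTransGen (Step F) u a)
    (hb : Relation.ReflTransGen (Step F) u b) :
    Relation.ReflTransGen (Step F) a b ∨ Relation.ReflTransGen (Step F) b a := by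
  induction hb using Relation.ReflTransGen.head_induction_on with
  | refl => exact Or.inr ha
  | @head x c hxc hcb ih =>
    rcases ha.cases_head with rfl | ⟨c', hxc', hc'a⟩
    · exact Or.inl (Relation.ReflTransGen.head hxc hcb)
    · exact ih (by rwa [step_det hxc hxc'])

/-- reaching `i` is insensitive to the value of the function at `i` -/
lemma reach_to_congr (h : ∀ v, v ≠ i → F' v = F v)
    (hr : Relation.ReflTransGen (Step F) a i) : Relation.ReflTransGen (Step F') a i := by
  induction hr using Relation.ReflTransGen.head_induction_on with
  | refl => exact Relation.ReflTransGen.refl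
  | @head x c hxc hcb ih =>
    by_cases hx : x = i
    · subst hx; exact Relation.ReflTransGen.refl
    · exact Relation.ReflTransGen.head (show Step F' x c by unfold Step at *; rw [h x hx]; exact hxc) ih

/-- a walk avoiding `i` is insensitive to the value at `i` -/
lemma reach_congr_avoid (h : ∀ v, v ≠ i → F' v = F v)
    (hr : Relation.ReflTransGen (Step F) a b)
    (hni : ¬ Relation.ReflTransGen (Step F) a i) :
    Relation.ReflTransGen (Step F') a b := by
  induction hr using Relation.ReflTransGen.head_induction_on with
  | refl => exact Relation.ReflTransGen.refl
  | @head x c hxc hcb ih =>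
    have hx : x ≠ i := fun hxi => hni (hxi ▸ Relation.ReflTransGen.refl)
    have hc : ¬ Relation.ReflTransGen (Step F) c i := fun hc => hni (Relation.ReflTransGen.head hxc hc)
    exact Relation.ReflTransGen.head
      (show Step F' x c by unfold Step at *; rw [h x hx]; exact hxc) (ih hc)

lemma transGen_congr_avoid (h : ∀ v, v ≠ i → F' v = F v)
    (hr : Relation.TransGen (Step F) a b)
    (hni : ¬ Relation.ReflTransGen (Step F) a i) :
    Relation.TransGen (Step F') a b := by
  rcases Relation.TransGen.head'_iff.1 hr with ⟨c, hac, hcb⟩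
  have hx : a ≠ i := fun hxi => hni (hxi ▸ Relation.ReflTransGen.refl)
  have hc : ¬ Relation.ReflTransGen (Step F) c i := fun hc => hni (Relation.ReflTransGen.head hac hc)
  exact Relation.TransGen.head' (show Step F' a c by unfold Step at *; rw [h a hx]; exact hac)
    (reach_congr_avoid h hcb hc)

/-- anything reachable from a cycle vertex reaches back -/
lemma reach_back (hc : Relation.TransGen (Step F) v v)
    (hr : Relation.ReflTransGen (Step F) v a) : Relation.ReflTransGen (Step F) a v := by
  induction hr with
  | refl => exact Relation.ReflTransGen.refl
  | tail hvb hba ih =>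
    rename_i b a'
    rcases ih.cases_head with rfl | ⟨c', hxc', hc'v⟩
    · rcases Relation.TransGen.head'_iff.1 hc with ⟨c, hvc, hcv⟩
      rwa [step_det hba hvc]
    · rw [step_det hba hxc']; exact hc'v

lemma cycle_rotate (hc : Relation.TransGen (Step F) v v)
    (hr : Relation.ReflTransGen (Step F) v a) : Relation.TransGen (Step F) a a :=
  Relation.TransGen.trans_left (Relation.TransGen.trans_right (reach_back hc hr) hc) hr

end Reach

section Forest

variable {w : Matrix (Fin n) (Fin n) ℝ} {F G : Fin n → Option (Fin n)} {i j u v y : Fin n}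

lemma update_ne (h : v ≠ i) (x : Option (Fin n)) : Function.update F i x v = F v :=
  Function.update_of_ne h x F

lemma update_agree (x : Option (Fin n)) : ∀ v, v ≠ i → Function.update F i x v = F v :=
  fun _ h => update_ne h x

lemma forestWeight_update_some (hFi : F i = none) :
    forestWeight w (Function.update F i (some u)) = w i u * forestWeight w F := by
  unfold forestWeight
  rw [← Finset.mul_prod_erase Finset.univ _ (Finset.mem_univ i),
      ← Finset.mul_prod_erase Finset.univ (fun v => (F v).elim 1 (fun u => w v u)) (Finset.mem_univ i)]
  rw [Function.update_self, hFi]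
  simp only [Option.elim]
  rw [Finset.prod_congr rfl (fun v hv => by
    rw [update_ne (Finset.ne_of_mem_erase hv)])]
  ring

lemma arcCount_update_some (hFi : F i = none) :
    arcCount (Function.update F i (some u)) = arcCount F + 1 := by
  unfold arcCount
  have : (Finset.univ.filter fun v => (Function.update F i (some u) v).isSome)
      = insert i (Finset.univ.filter fun v => (F v).isSome) := by
    ext v
    by_cases hv : v = i
    · subst hv; simp [Function.update_self]
    · simp [update_ne hv, hv]
  rw [this, Finset.card_insert_of_notMem (by simp [hFi])]

lemma eq_update_update (hFi : F i = some y) :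
    F = Function.update (Function.update F i none) i (some y) := by
  funext v
  by_cases hv : v = i
  · subst hv; simp [Function.update_self, hFi]
  · simp [update_ne hv]

lemma isInForest_update_none (hF : IsInForest w F) :
    IsInForest w (Function.update F i none) := by
  constructor
  · intro v u hv
    by_cases hvi : v = i
    · subst hvi; rw [Function.update_self] at hv; exact absurd hv (by simp)
    · exact hF.1 v u (by rwa [update_ne hvi] at hv)
  · intro v hv
    refine hF.2 v (Relation.TransGen.mono ?_ v v hv)
    intro a b hab
    by_cases hai : a = i
    · exfalso; unfold Step at hab; rw [hai, Function.update_self] at hab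
      simp at hab
    · unfold Step at *; rwa [update_ne hai] at hab

lemma not_reach_back_of_forest (hF : IsInForest w F) (hFi : F i = some u) :
    ¬ Relation.ReflTransGen (Step F) u i :=
  fun h => hF.2 i (Relation.TransGen.head' (show Step F i u from hFi) h)

lemma isInForest_update_some (hF : IsInForest w F) (hFi : F i = none)
    (hui : u ≠ i) (hwp : 0 < w i u)
    (hni : ¬ Relation.ReflTransGen (Step F) u i) :
    IsInForest w (Function.update F i (some u)) := by
  have hagree : ∀ v, v ≠ i → Function.update F i (some u) v = F v := update_agree _
  constructor
  · intro v x hv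
    by_cases hvi : v = i
    · subst hvi
      rw [Function.update_self] at hv
      obtain rfl : u = x := Option.some.inj hv
      exact ⟨Ne.symm hui, hwp⟩
    · exact hF.1 v x (by rwa [update_ne hvi] at hv)
  · intro v hv
    by_cases hreach : Relation.ReflTransGen (Step (Function.update F i (some u))) v i
    · have hii : Relation.TransGen (Step (Function.update F i (some u))) i i :=
        cycle_rotate hv hreach
      rcases Relation.TransGen.head'_iff.1 hii with ⟨c, hic, hci⟩
      have hcu : c = u := by
        unfold Step at hic; rw [Function.update_self] at hic
        exact (Option.some.inj hic).symm
      subst hcu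
      exact hni (reach_to_congr (fun v hvi => (hagree v hvi).symm) hci)
    · exact hF.2 v (transGen_congr_avoid (fun v hvi => (hagree v hvi).symm) hv hreach)

lemma intree_root (hFi : F i = none) : InTreeOf F i j ↔ i = j := by
  constructor
  · rintro ⟨hr, -⟩
    rcases hr.cases_head with rfl | ⟨c, hic, -⟩
    · rfl
    · unfold Step at hic; rw [hFi] at hic; simp at hic
  · rintro rfl; exact ⟨Relation.ReflTransGen.refl, hFi⟩

lemma intree_congr {F' : Fin n → Option (Fin n)} {a : Fin n}
    (h : ∀ v, v ≠ i → F' v = F v)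
    (ha : ¬ Relation.ReflTransGen (Step F) a i) :
    InTreeOf F a j ↔ InTreeOf F' a j := by
  have ha' : ¬ Relation.ReflTransGen (Step F') a i :=
    fun hr => ha (reach_to_congr (fun v hv => (h v hv).symm) hr)
  constructor
  · rintro ⟨hr, hj⟩
    have hji : j ≠ i := by rintro rfl; exact ha hr
    exact ⟨reach_congr_avoid h hr ha, by rw [h j hji]; exact hj⟩
  · rintro ⟨hr, hj⟩
    have hji : j ≠ i := by rintro rfl; exact ha' hr
    exact ⟨reach_congr_avoid (fun v hv => (h v hv).symm) hr ha', by rw [← h j hji]; exact hj⟩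

lemma intree_of_reach (hui : Relation.ReflTransGen (Step F) u i) :
    InTreeOf F u j ↔ InTreeOf F i j := by
  constructor
  · rintro ⟨hr, hj⟩
    rcases reach_total hr hui with hji | hij
    · rcases hji.cases_head with rfl | ⟨c, hic, -⟩
      · exact ⟨Relation.ReflTransGen.refl, hj⟩
      · unfold Step at hic; rw [hj] at hic; simp at hic
    · exact ⟨hij, hj⟩
  · rintro ⟨hr, hj⟩
    exact ⟨hui.trans hr, hj⟩

lemma intree_step (hFi : F i = some y) :
    InTreeOf F i j ↔ InTreeOf F y j := by
  by_cases hij : i = j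
  · subst hij
    constructor
    · rintro ⟨-, hj⟩; rw [hj] at hFi; simp at hFi
    · rintro ⟨-, hj⟩; rw [hj] at hFi; simp at hFi
  · constructor
    · rintro ⟨hr, hj⟩
      rcases hr.cases_head with rfl | ⟨c, hic, hcj⟩
      · exact absurd rfl hij
      · have : c = y := by unfold Step at hic; rw [hFi] at hic; exact (Option.some.inj hic).symm
        exact ⟨this ▸ hcj, hj⟩
    · rintro ⟨hr, hj⟩
      exact ⟨Relation.ReflTransGen.head (show Step F i y from hFi) hr, hj⟩

end Forest

section Qlayer

variable {w : Matrix (Fin n) (Fin n) ℝ} {F : Fin n → Option (Fin n)} {i j : Fin n}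

lemma forestWeight_pos (hF : IsInForest w F) : 0 < forestWeight w F := by
  apply Finset.prod_pos
  intro v _
  rcases hv : F v with _ | u
  · simp
  · simpa using (hF.1 v u hv).2

/-- the empty forest -/
lemma isInForest_none : IsInForest w (fun _ => none) := by
  refine ⟨fun v u hv => by simp at hv, fun v hv => ?_⟩
  rcases Relation.TransGen.head'_iff.1 hv with ⟨c, hc, -⟩
  simp [Step] at hc

lemma arcCount_eq_zero_iff : arcCount F = 0 ↔ ∀ v, F v = none := by
  unfold arcCount
  rw [Finset.card_eq_zero, Finset.filter_eq_empty_iff]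
  constructor
  · intro h v
    have := h (Finset.mem_univ v)
    rcases hv : F v with _ | u
    · rfl
    · rw [hv] at this; simp at this
  · intro h v _
    rw [h v]; simp

lemma Qmat_zero : Qmat w 0 = (1 : Matrix (Fin n) (Fin n) ℝ) := by
  ext i j
  rw [Qmat, Matrix.of_apply, Finset.sum_eq_single (fun _ => none)]
  · rw [Matrix.one_apply]
    have h1 : InTreeOf (fun _ => (none : Option (Fin n))) i j ↔ i = j := intree_root rfl
    have h2 : forestWeight w (fun _ => (none : Option (Fin n))) = 1 := by
      unfold forestWeight; simp
    by_cases hij : i = j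
    · rw [if_pos ⟨isInForest_none, arcCount_eq_zero_iff.2 fun _ => rfl, h1.2 hij⟩, h2, if_pos hij]
    · rw [if_neg (fun h => hij (h1.1 h.2.2)), if_neg hij]
  · intro F _ hF
    apply if_neg
    rintro ⟨-, hc, -⟩
    exact hF (funext (arcCount_eq_zero_iff.1 hc))
  · intro h
    exact absurd (Finset.mem_univ _) h

lemma sigmaW_zero : sigmaW w 0 = 1 := by
  rw [sigmaW, Finset.sum_eq_single (fun _ => none)]
  · rw [if_pos ⟨isInForest_none, arcCount_eq_zero_iff.2 fun _ => rfl⟩]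
    unfold forestWeight; simp
  · intro F _ hF
    apply if_neg
    rintro ⟨-, hc⟩
    exact hF (funext (arcCount_eq_zero_iff.1 hc))
  · intro h
    exact absurd (Finset.mem_univ _) h

lemma sigmaW_eq_zero {m : ℕ} (hbound : ∀ F : Fin n → Option (Fin n), IsInForest w F → arcCount F ≤ m)
    {k : ℕ} (hk : m < k) : sigmaW w k = 0 := by
  rw [sigmaW]
  apply Finset.sum_eq_zero
  intro F _
  apply if_neg
  rintro ⟨hF, hc⟩
  exact absurd (hc ▸ hbound F hF) (by omega)

lemma Qmat_eq_zero {m : ℕ} (hbound : ∀ F : Fin n → Option (Fin n), IsInForest w F → arcCount F ≤ m)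
    {k : ℕ} (hk : m < k) : Qmat w k = 0 := by
  ext i j
  rw [Qmat, Matrix.of_apply]
  rw [show (0 : Matrix (Fin n) (Fin n) ℝ) i j = 0 from rfl]
  apply Finset.sum_eq_zero
  intro F _
  apply if_neg
  rintro ⟨hF, hc, -⟩
  exact absurd (hc ▸ hbound F hF) (by omega)

lemma sigmaW_pos {m : ℕ} (hmax : ∃ F, IsInForest w F ∧ arcCount F = m) :
    0 < sigmaW w m := by
  obtain ⟨F₀, hF₀⟩ := hmax
  rw [sigmaW]
  apply Finset.sum_pos'
  · intro F _
    split_ifs with h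
    · exact (forestWeight_pos h.1).le
    · exact le_refl 0
  · exact ⟨F₀, Finset.mem_univ _, by rw [if_pos hF₀]; exact forestWeight_pos hF₀.1⟩


lemma involution_aux {w : Matrix (Fin n) (Fin n) ℝ} {i j u y : Fin n}
    {F : Fin n → Option (Fin n)}
    (hF : IsInForest w F) (hu : u ≠ i) (hwu : 0 < w i u)
    (hy : F i = some y) (hnr : ¬ Relation.ReflTransGen (Step F) u i) :
    IsInForest w (Function.update F i (some u)) ∧
    arcCount (Function.update F i (some u)) = arcCount F ∧
    w i y * forestWeight w (Function.update F i (some u)) = w i u * forestWeight w F ∧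
    (InTreeOf (Function.update F i (some u)) u j ↔ InTreeOf F u j) ∧
    (InTreeOf (Function.update F i (some u)) y j ↔ InTreeOf F y j) ∧
    ¬ Relation.ReflTransGen (Step (Function.update F i (some u))) y i := by
  have hyi : y ≠ i := Ne.symm (hF.1 i y hy).1
  have hagree : ∀ v, v ≠ i → Function.update F i (some u) v = F v := update_agree _
  have hagree' : ∀ v, v ≠ i → F v = Function.update F i (some u) v :=
    fun v hv => (hagree v hv).symm
  have hF0i : Function.update F i none i = none := Function.update_self _ _ _
  have hFF0 : F = Function.update (Function.update F i none) i (some y) := eq_update_update hy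
  have hupd : Function.update F i (some u)
      = Function.update (Function.update F i none) i (some u) := (Function.update_idem _ _ _).symm
  have hF0 : IsInForest w (Function.update F i none) := isInForest_update_none hF
  have hnr0 : ¬ Relation.ReflTransGen (Step (Function.update F i none)) u i :=
    fun h => hnr (reach_to_congr (fun v hv => (update_ne hv none).symm) h)
  have hny : ¬ Relation.ReflTransGen (Step F) y i := not_reach_back_of_forest hF hy
  refine ⟨?_, ?_, ?_, ?_, ?_, ?_⟩
  · rw [hupd]; exact isInForest_update_some hF0 hF0i hu hwu hnr0
  · rw [hupd, arcCount_update_some hF0i]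
    conv_rhs => rw [hFF0, arcCount_update_some hF0i]
  · rw [hupd, forestWeight_update_some hF0i]
    conv_rhs => rw [hFF0, forestWeight_update_some hF0i]
    ring
  · exact (intree_congr hagree hnr).symm
  · exact (intree_congr hagree hny).symm
  · exact fun h => hny (reach_to_congr hagree' h)

lemma lap_mul_Qmat (hw : ∀ i j, 0 ≤ w i j) (k : ℕ) :
    lap w * Qmat w k = sigmaW w (k+1) • (1 : Matrix (Fin n) (Fin n) ℝ) - Qmat w (k+1) := by
  ext i j
  classical
  set wt := forestWeight w with hwt
  -- the pair summand
  set f : Fin n × (Fin n → Option (Fin n)) → ℝ := fun p =>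
    w i p.1 * ((if IsInForest w p.2 ∧ arcCount p.2 = k ∧ InTreeOf p.2 i j then wt p.2 else 0)
      - (if IsInForest w p.2 ∧ arcCount p.2 = k ∧ InTreeOf p.2 p.1 j then wt p.2 else 0))
    with hf
  set hfun : (Fin n → Option (Fin n)) → ℝ := fun G =>
    (if i = j then wt G else 0) - (if InTreeOf G i j then wt G else 0) with hhfun
  set SP : Finset (Fin n × (Fin n → Option (Fin n))) := Finset.univ.filter (fun p =>
    p.1 ≠ i ∧ 0 < w i p.1 ∧ IsInForest w p.2 ∧ arcCount p.2 = k ∧ p.2 i = none ∧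
      ¬ Relation.ReflTransGen (Step p.2) p.1 i) with hSP
  set SA : Finset (Fin n × (Fin n → Option (Fin n))) := Finset.univ.filter (fun p =>
    p.1 ≠ i ∧ 0 < w i p.1 ∧ IsInForest w p.2 ∧ arcCount p.2 = k ∧ (p.2 i).isSome ∧
      ¬ Relation.ReflTransGen (Step p.2) p.1 i) with hSA
  set SG : Finset (Fin n → Option (Fin n)) := Finset.univ.filter (fun G =>
    IsInForest w G ∧ arcCount G = k + 1 ∧ (G i).isSome) with hSG
  have hQapp : ∀ (a b : Fin n), Qmat w k a b
      = ∑ F : Fin n → Option (Fin n),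
          (if IsInForest w F ∧ arcCount F = k ∧ InTreeOf F a b then wt F else 0) := by
    intro a b; rfl
  -- Step 1 : expand the matrix product into a sum over pairs
  have step1 : (lap w * Qmat w k) i j
      = ∑ p ∈ (Finset.univ.erase i) ×ˢ Finset.univ, f p := by
    rw [Finset.sum_product]
    have hQsum : ∀ u : Fin n, (∑ F : Fin n → Option (Fin n), f (u, F))
        = w i u * (Qmat w k i j - Qmat w k u j) := by
      intro u
      rw [hQapp i j, hQapp u j]
      rw [← Finset.sum_sub_distrib]
      rw [Finset.mul_sum]
    rw [Finset.sum_congr rfl (fun u _ => hQsum u)]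
    rw [Matrix.mul_apply, ← Finset.add_sum_erase _ _ (Finset.mem_univ i)]
    have hlii : lap w i i = ∑ u ∈ Finset.univ.erase i, w i u := by
      rw [lap, Matrix.of_apply, if_pos rfl]
    have e1 : ∀ v ∈ Finset.univ.erase i, lap w i v * Qmat w k v j
        = -(w i v * Qmat w k v j) := by
      intro v hv
      rw [lap, Matrix.of_apply, if_neg (Ne.symm (Finset.mem_erase.1 hv).1)]
      ring
    rw [Finset.sum_congr rfl e1, hlii, Finset.sum_mul]
    rw [Finset.sum_neg_distrib, ← sub_eq_add_neg, ← Finset.sum_sub_distrib]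
    exact Finset.sum_congr rfl (fun u _ => by ring)
  -- Step 2 : only the pairs in SP ∪ SA contribute
  have hdisj : Disjoint SP SA := by
    rw [Finset.disjoint_left]
    intro p hp hp'
    rw [hSP, Finset.mem_filter] at hp
    rw [hSA, Finset.mem_filter] at hp'
    rw [hp.2.2.2.2.2.1] at hp'
    simp at hp'
  have hsub : SP ∪ SA ⊆ (Finset.univ.erase i) ×ˢ Finset.univ := by
    intro p hp
    rcases Finset.mem_union.1 hp with hp | hp
    · rw [hSP, Finset.mem_filter] at hp
      exact Finset.mem_product.2 ⟨Finset.mem_erase.2 ⟨hp.2.1, Finset.mem_univ _⟩, Finset.mem_univ _⟩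
    · rw [hSA, Finset.mem_filter] at hp
      exact Finset.mem_product.2 ⟨Finset.mem_erase.2 ⟨hp.2.1, Finset.mem_univ _⟩, Finset.mem_univ _⟩
  have hzero : ∀ p ∈ (Finset.univ.erase i) ×ˢ Finset.univ, p ∉ SP ∪ SA → f p = 0 := by
    rintro ⟨u, F⟩ hp hnm
    have hu : u ≠ i := (Finset.mem_erase.1 (Finset.mem_product.1 hp).1).1
    by_cases hw0 : 0 < w i u
    swap
    · have hw00 : w i u = 0 := le_antisymm (le_of_not_gt hw0) (hw i u)
      simp only [hf, hw00, zero_mul]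
    by_cases hFk : IsInForest w F ∧ arcCount F = k
    swap
    · simp only [hf]
      rw [if_neg (by tauto), if_neg (by tauto), sub_self, mul_zero]
    have hreach : Relation.ReflTransGen (Step F) u i := by
      by_contra hnr
      apply hnm
      rcases hFi : F i with _ | y
      · exact Finset.mem_union_left _ (by
          rw [hSP, Finset.mem_filter]
          exact ⟨Finset.mem_univ _, hu, hw0, hFk.1, hFk.2, hFi, hnr⟩)
      · exact Finset.mem_union_right _ (by
          rw [hSA, Finset.mem_filter]
          exact ⟨Finset.mem_univ _, hu, hw0, hFk.1, hFk.2, by simp [hFi], hnr⟩)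
    simp only [hf]
    rw [show (InTreeOf F u j) = (InTreeOf F i j) from propext (intree_of_reach hreach),
      sub_self, mul_zero]
  have step2 : ∑ p ∈ (Finset.univ.erase i) ×ˢ Finset.univ, f p
      = ∑ p ∈ SP, f p + ∑ p ∈ SA, f p := by
    rw [← Finset.sum_union hdisj]
    exact (Finset.sum_subset hsub hzero).symm
  have step3 : ∑ p ∈ SA, f p = 0 := by
    refine Finset.sum_involution
      (fun p _ => ((p.2 i).getD i, Function.update p.2 i (some p.1))) ?_ ?_ ?_ ?_
    · rintro ⟨u, F⟩ ha
      rw [hSA, Finset.mem_filter] at ha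
      dsimp only at ha
      obtain ⟨-, hu, hwu, hFor, hk, hsome, hnr⟩ := ha
      obtain ⟨y, hy⟩ := Option.isSome_iff_exists.1 hsome
      obtain ⟨hFor', hk', hwq, hITu, hITy, -⟩ :=
        involution_aux (w := w) (j := j) hFor hu hwu hy hnr
      have hgetD : (F i).getD i = y := by rw [hy]; rfl
      have hITi : InTreeOf F i j ↔ InTreeOf F y j := intree_step hy
      have hITi' : InTreeOf (Function.update F i (some u)) i j ↔ InTreeOf F u j :=
        (intree_step (Function.update_self _ _ _)).trans hITu
      have harc : arcCount (Function.update F i (some u)) = k := by rw [hk']; exact hk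
      simp only [hf]
      simp only [hgetD, hFor, hk, hFor', harc, eq_self_iff_true, true_and,
        hITi, hITi', hITy]
      split_ifs <;> nlinarith [hwq]
    · rintro ⟨u, F⟩ ha hne
      rw [hSA, Finset.mem_filter] at ha
      dsimp only at ha
      obtain ⟨-, hu, hwu, hFor, hk, hsome, hnr⟩ := ha
      obtain ⟨y, hy⟩ := Option.isSome_iff_exists.1 hsome
      have hgetD : (F i).getD i = y := by rw [hy]; rfl
      intro heq
      apply hne
      have hyu : y = u := by
        have := congrArg Prod.fst heq
        simpa [hgetD] using this
      have hiff : InTreeOf F i j ↔ InTreeOf F u j := by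
        rw [← hyu]; exact intree_step hy
      simp only [hf]
      simp only [hiff, sub_self, mul_zero]
    · rintro ⟨u, F⟩ ha
      have ha' := ha
      rw [hSA, Finset.mem_filter] at ha'
      dsimp only at ha'
      obtain ⟨-, hu, hwu, hFor, hk, hsome, hnr⟩ := ha'
      obtain ⟨y, hy⟩ := Option.isSome_iff_exists.1 hsome
      obtain ⟨hFor', hk', hwq, hITu, hITy, hnr'⟩ :=
        involution_aux (w := w) (j := j) hFor hu hwu hy hnr
      have hgetD : (F i).getD i = y := by rw [hy]; rfl
      have hyi : y ≠ i := Ne.symm (hFor.1 i y hy).1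
      refine Finset.mem_filter.2 ⟨Finset.mem_univ _, ?_⟩
      dsimp only
      simp only [hgetD]
      exact ⟨hyi, (hFor.1 i y hy).2, hFor', by rw [hk']; exact hk,
        by simp [Function.update_self], hnr'⟩
    · rintro ⟨u, F⟩ ha
      have ha' := ha
      rw [hSA, Finset.mem_filter] at ha'
      dsimp only at ha'
      obtain ⟨-, hu, hwu, hFor, hk, hsome, hnr⟩ := ha'
      obtain ⟨y, hy⟩ := Option.isSome_iff_exists.1 hsome
      have hgetD : (F i).getD i = y := by rw [hy]; rfl
      dsimp only
      simp only [hgetD]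
      refine Prod.ext ?_ ?_
      · simp [Function.update_self]
      · dsimp only
        rw [Function.update_idem]
        conv_rhs => rw [← Function.update_eq_self i F, hy]
  -- Step 4 : the bijection between SP and SG
  have step4 : ∑ p ∈ SP, f p = ∑ G ∈ SG, hfun G := by
    refine Finset.sum_nbij' (fun p => Function.update p.2 i (some p.1))
      (fun G => ((G i).getD i, Function.update G i none)) ?_ ?_ ?_ ?_ ?_
    · rintro ⟨u, F⟩ hp
      have hp' := hp
      rw [hSP, Finset.mem_filter] at hp'
      dsimp only at hp'
      obtain ⟨-, hu, hwu, hFor, hk, hFnone, hnr⟩ := hp'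
      refine Finset.mem_filter.2 ⟨Finset.mem_univ _, ?_⟩
      dsimp only
      exact ⟨isInForest_update_some hFor hFnone hu hwu hnr,
        by rw [arcCount_update_some hFnone, hk],
        by simp [Function.update_self]⟩
    · intro G hG
      have hG' := hG
      rw [hSG, Finset.mem_filter] at hG'
      obtain ⟨-, hFor, harc, hsome⟩ := hG'
      obtain ⟨u, hu⟩ := Option.isSome_iff_exists.1 hsome
      have hgetD : (G i).getD i = u := by rw [hu]; rfl
      have hui : u ≠ i := Ne.symm (hFor.1 i u hu).1
      have hagree : ∀ v, v ≠ i → G v = Function.update G i none v :=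
        fun v hv => (update_ne hv none).symm
      refine Finset.mem_filter.2 ⟨Finset.mem_univ _, ?_⟩
      dsimp only
      simp only [hgetD]
      have harc0 : arcCount G = arcCount (Function.update G i none) + 1 := by
        conv_lhs => rw [eq_update_update hu, arcCount_update_some (Function.update_self _ _ _)]
      refine ⟨hui, (hFor.1 i u hu).2, isInForest_update_none hFor, by omega,
        Function.update_self _ _ _, ?_⟩
      exact fun h => not_reach_back_of_forest hFor hu (reach_to_congr hagree h)
    · rintro ⟨u, F⟩ hp
      have hp' := hp
      rw [hSP, Finset.mem_filter] at hp'
      dsimp only at hp'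
      obtain ⟨-, hu, hwu, hFor, hk, hFnone, hnr⟩ := hp'
      refine Prod.ext ?_ ?_
      · simp [Function.update_self]
      · dsimp only
        rw [Function.update_idem]
        conv_rhs => rw [← Function.update_eq_self i F, hFnone]
    · intro G hG
      have hG' := hG
      rw [hSG, Finset.mem_filter] at hG'
      obtain ⟨-, hFor, harc, hsome⟩ := hG'
      obtain ⟨u, hu⟩ := Option.isSome_iff_exists.1 hsome
      have hgetD : (G i).getD i = u := by rw [hu]; rfl
      dsimp only
      simp only [hgetD]
      rw [Function.update_idem]
      conv_rhs => rw [← Function.update_eq_self i G, hu]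
    · rintro ⟨u, F⟩ hp
      have hp' := hp
      rw [hSP, Finset.mem_filter] at hp'
      dsimp only at hp'
      obtain ⟨-, hu, hwu, hFor, hk, hFnone, hnr⟩ := hp'
      have hagree : ∀ v, v ≠ i → Function.update F i (some u) v = F v := update_agree _
      have hIT : InTreeOf (Function.update F i (some u)) i j ↔ InTreeOf F u j :=
        (intree_step (Function.update_self _ _ _)).trans (intree_congr hagree hnr).symm
      have hwq : wt (Function.update F i (some u)) = w i u * wt F := by
        rw [hwt]; exact forestWeight_update_some hFnone
      have hroot : InTreeOf F i j ↔ i = j := intree_root hFnone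
      simp only [hf, hhfun]
      simp only [hFor, hk, eq_self_iff_true, true_and, hroot, hIT, hwq]
      split_ifs <;> ring
  -- Step 5 : the right-hand side as a sum over SG
  have step5 : (sigmaW w (k+1) • (1 : Matrix (Fin n) (Fin n) ℝ) - Qmat w (k+1)) i j
      = ∑ G ∈ SG, hfun G := by
    have hQ1 : Qmat w (k+1) i j = ∑ G : Fin n → Option (Fin n),
        (if IsInForest w G ∧ arcCount G = k+1 ∧ InTreeOf G i j then wt G else 0) := rfl
    have hs : sigmaW w (k+1) = ∑ G : Fin n → Option (Fin n),
        (if IsInForest w G ∧ arcCount G = k+1 then wt G else 0) := rfl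
    rw [Matrix.sub_apply, Matrix.smul_apply, Matrix.one_apply, smul_eq_mul, hQ1, hs,
      Finset.sum_mul, ← Finset.sum_sub_distrib]
    have hbody : ∀ G : Fin n → Option (Fin n),
        (if IsInForest w G ∧ arcCount G = k+1 then wt G else 0) * (if i = j then (1:ℝ) else 0)
          - (if IsInForest w G ∧ arcCount G = k+1 ∧ InTreeOf G i j then wt G else 0)
        = (if IsInForest w G ∧ arcCount G = k+1 then (if i = j then wt G else 0) else 0)
          - (if IsInForest w G ∧ arcCount G = k+1 ∧ InTreeOf G i j then wt G else 0) := by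
      intro G; split_ifs <;> ring
    rw [Finset.sum_congr rfl (fun G _ => hbody G)]
    rw [← Finset.sum_subset (Finset.subset_univ SG) ?vanish]
    · apply Finset.sum_congr rfl
      intro G hG
      rw [hSG, Finset.mem_filter] at hG
      obtain ⟨-, hFor, harc, hsome⟩ := hG
      simp only [hhfun]
      simp only [hFor, harc, eq_self_iff_true, true_and, if_true]
    case vanish =>
      intro G _ hG
      rw [hSG, Finset.mem_filter] at hG
      by_cases hc : IsInForest w G ∧ arcCount G = k+1
      · have hGi : G i = none := by
          rcases hGi : G i with _ | u
          · rfl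
          · exact absurd ⟨Finset.mem_univ _, hc.1, hc.2, by simp [hGi]⟩ hG
        simp only [hc.1, hc.2, intree_root hGi, eq_self_iff_true, true_and, if_true, sub_self]
      · rw [if_neg hc, if_neg (by tauto), sub_self]
  rw [step1, step2, step3, add_zero, step4, step5]

end Qlayer

section Main

variable {w : Matrix (Fin n) (Fin n) ℝ}

lemma groupInverse_unique {L X Y : Matrix (Fin n) (Fin n) ℝ}
    (hX : IsGroupInverse L X) (hY : IsGroupInverse L Y) : X = Y := by
  obtain ⟨hX1, hX2, hX3⟩ := hX
  obtain ⟨hY1, hY2, hY3⟩ := hY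
  have e1 : (L * X) * (L * Y) = L * Y := by rw [← mul_assoc, hX1]
  have e2 : (L * X) * (L * Y) = L * X := by
    rw [hX3, hY3, mul_assoc, ← mul_assoc L Y L, hY1]
  have hEF : L * X = L * Y := by rw [← e2, e1]
  calc X = X * L * X := hX2.symm
    _ = X * (L * X) := by rw [mul_assoc]
    _ = X * (L * Y) := by rw [hEF]
    _ = X * L * Y := by rw [mul_assoc]
    _ = L * X * Y := by rw [hX3]
    _ = L * Y * Y := by rw [hEF]
    _ = Y * L * Y := by rw [hY3]
    _ = Y := hY2

lemma Qmat_comm (hw : ∀ i j, 0 ≤ w i j) (k : ℕ) :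
    lap w * Qmat w k = Qmat w k * lap w := by
  induction k with
  | zero => rw [Qmat_zero, mul_one, one_mul]
  | succ k ih =>
    have h2 : Qmat w (k+1) = sigmaW w (k+1) • 1 - lap w * Qmat w k := by
      rw [lap_mul_Qmat hw k]; exact (sub_sub_cancel _ _).symm
    rw [h2, mul_sub, sub_mul, Matrix.mul_smul, Matrix.smul_mul, mul_one, one_mul]
    congr 1
    rw [mul_assoc, ih, ← mul_assoc]

theorem groupInverse_eq_forests' (hw : ∀ i j, 0 ≤ w i j) (hloop : ∀ i, w i i = 0)
    (d : ℕ) (hdn : d ≤ n)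
    (hmax : ∃ F, IsInForest w F ∧ arcCount F = n - d)
    (hbound : ∀ F, IsInForest w F → arcCount F ≤ n - d)
    (Lsharp : Matrix (Fin n) (Fin n) ℝ) (hL : IsGroupInverse (lap w) Lsharp) :
    Lsharp = (sigmaW w (n - d))⁻¹ •
      (Qmat w (n - d - 1) - (sigmaW w (n - d - 1) / sigmaW w (n - d)) • Qmat w (n - d)) := by
  set m := n - d with hmdef
  have hσ : 0 < sigmaW w m := sigmaW_pos hmax
  have hQtop : Qmat w (m+1) = 0 := Qmat_eq_zero hbound (lt_add_one m)
  have hσtop : sigmaW w (m+1) = 0 := sigmaW_eq_zero hbound (lt_add_one m)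
  have hLQm : lap w * Qmat w m = 0 := by
    rw [lap_mul_Qmat hw m, hσtop, hQtop, zero_smul, sub_zero]
  have hQmL : Qmat w m * lap w = 0 := by rw [← Qmat_comm hw m, hLQm]
  by_cases hm : m = 0
  · -- degenerate case : the Laplacian is zero
    have hσ1 : sigmaW w 1 = 0 := by simpa [hm] using hσtop
    have hQ1 : Qmat w 1 = 0 := by simpa [hm] using hQtop
    have hL0 : lap w = 0 := by
      have h := lap_mul_Qmat hw 0
      rw [Qmat_zero, mul_one] at h
      rw [h, hσ1, hQ1, zero_smul, sub_zero]
    have hX0 : Lsharp = 0 := by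
      have h2 := hL.2.1
      rw [hL0, mul_zero, zero_mul] at h2
      exact h2.symm
    have hσ' : 0 < sigmaW w 0 := by rwa [hm] at hσ
    rw [hX0, hm, Nat.zero_sub, div_self hσ'.ne', one_smul, sub_self, smul_zero]
  · -- main case
    have hm1 : m - 1 + 1 = m := Nat.succ_pred_eq_of_pos (Nat.pos_of_ne_zero hm)
    have recm : lap w * Qmat w (m-1) = sigmaW w m • 1 - Qmat w m := by
      have h := lap_mul_Qmat hw (m-1)
      rwa [hm1] at h
    have hQQ : ∀ k, Qmat w m * Qmat w k = sigmaW w k • Qmat w m := by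
      intro k
      induction k with
      | zero => rw [Qmat_zero, sigmaW_zero, mul_one, one_smul]
      | succ k ih =>
        have h2 : Qmat w (k+1) = sigmaW w (k+1) • 1 - lap w * Qmat w k := by
          rw [lap_mul_Qmat hw k]; exact (sub_sub_cancel _ _).symm
        rw [h2, mul_sub, Matrix.mul_smul, mul_one, ← mul_assoc, hQmL, zero_mul, sub_zero]
    set X : Matrix (Fin n) (Fin n) ℝ := (sigmaW w m)⁻¹ •
      (Qmat w (m - 1) - (sigmaW w (m-1) / sigmaW w m) • Qmat w m) with hXdef
    have hLX : lap w * X = 1 - (sigmaW w m)⁻¹ • Qmat w m := by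
      rw [hXdef, Matrix.mul_smul, mul_sub, Matrix.mul_smul, recm, hLQm, smul_zero, sub_zero,
        smul_sub, smul_smul, inv_mul_cancel₀ hσ.ne', one_smul]
    have hXL : X * lap w = lap w * X := by
      rw [hXdef, Matrix.smul_mul, Matrix.mul_smul]
      congr 1
      rw [sub_mul, mul_sub, Matrix.smul_mul, Matrix.mul_smul, Qmat_comm hw (m-1), Qmat_comm hw m]
    have hQmX : Qmat w m * X = 0 := by
      rw [hXdef, Matrix.mul_smul, mul_sub, Matrix.mul_smul, hQQ (m-1), hQQ m, smul_smul,
        div_mul_cancel₀ _ hσ.ne', sub_self, smul_zero]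
    have hGI : IsGroupInverse (lap w) X := by
      refine ⟨?_, ?_, hXL.symm⟩
      · rw [hLX, sub_mul, one_mul, Matrix.smul_mul, hQmL, smul_zero, sub_zero]
      · rw [hXL, hLX, sub_mul, one_mul, Matrix.smul_mul, hQmX, smul_zero, sub_zero]
    exact groupInverse_unique hL hGI

end Main

/-- Chebotarev–Agaev. Forest expression of the group inverse of the
Laplacian of a weighted digraph of in-forest dimension `d`:
`L^# = σ_{n-d}⁻¹ (Q_{n-d-1} - (σ_{n-d-1}/σ_{n-d}) Q_{n-d})`. -/
theorem groupInverse_eq_forests {n : ℕ} (w : Matrix (Fin n) (Fin n) ℝ)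
    (hw : ∀ i j, 0 ≤ w i j) (hloop : ∀ i, w i i = 0)
    (d : ℕ) (hdn : d ≤ n)
    (hmax : ∃ F, IsInForest w F ∧ arcCount F = n - d)
    (hbound : ∀ F, IsInForest w F → arcCount F ≤ n - d)
    (Lsharp : Matrix (Fin n) (Fin n) ℝ) (hL : IsGroupInverse (lap w) Lsharp) :
    Lsharp = (sigmaW w (n - d))⁻¹ •
      (Qmat w (n - d - 1) - (sigmaW w (n - d - 1) / sigmaW w (n - d)) • Qmat w (n - d)) :=
  groupInverse_eq_forests' hw hloop d hdn hmax hbound Lsharp hL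

end MFPT
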